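/- For every real x and every δ > 0, and for every real c with |c| ≤ δ, |Φ((1+δ)x + c) − Φ(x)| ≤ 2δ, where Φ is the standard normal CDF. -/
import Mathlib


open MeasureTheory

noncomputable def stdNormalCDF (x : ℝ) : ℝ :=
  (Real.sqrt (2 * Real.pi))⁻¹ * ∫ t in Set.Iic x, Real.exp (-t ^ 2 / 2)

lemma gauss_integrable : Integrable (fun t : ℝ => Real.exp (-t ^ 2 / 2)) := by
  have h := integrable_exp_neg_mul_sq (b := (1:ℝ)/2) (by norm_num)
  convert h using 2 with t
  ring_nf

lemma sqrt_two_pi_inv_le_one : (Real.sqrt (2 * Real.pi))⁻¹ ≤ 1 := by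
  rw [inv_le_one_iff₀]
  right
  rw [show (1:ℝ) = Real.sqrt 1 by simp]
  exact Real.sqrt_le_sqrt (by nlinarith [Real.pi_gt_three])

lemma key (a b C : ℝ) (hab : a ≤ b)
    (hC : ∀ t ∈ Set.Ioc a b, Real.exp (-t ^ 2 / 2) ≤ C) :
    |stdNormalCDF b - stdNormalCDF a| ≤ C * (b - a) := by
  unfold stdNormalCDF
  rw [← mul_sub, abs_mul]
  have hdiff : ((∫ t in Set.Iic b, Real.exp (-t ^ 2 / 2)) -
      ∫ t in Set.Iic a, Real.exp (-t ^ 2 / 2)) = ∫ t in a..b, Real.exp (-t ^ 2 / 2) :=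
    intervalIntegral.integral_Iic_sub_Iic gauss_integrable.integrableOn gauss_integrable.integrableOn
  rw [hdiff]
  have hb : |∫ t in a..b, Real.exp (-t ^ 2 / 2)| ≤ C * |b - a| := by
    rw [← Real.norm_eq_abs]
    apply intervalIntegral.norm_integral_le_of_norm_le_const
    intro t ht
    rw [Set.uIoc_of_le hab] at ht
    simpa using hC t ht
  rw [abs_of_nonneg (sub_nonneg.mpr hab)] at hb
  calc |(Real.sqrt (2 * Real.pi))⁻¹| * |∫ t in a..b, Real.exp (-t ^ 2 / 2)|
      ≤ 1 * (C * (b - a)) := by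
        apply mul_le_mul _ hb (abs_nonneg _) zero_le_one
        rw [abs_of_nonneg (by positivity)]
        exact sqrt_two_pi_inv_le_one
    _ = C * (b - a) := one_mul _

lemma lip (u v : ℝ) : |stdNormalCDF u - stdNormalCDF v| ≤ |u - v| := by
  rcases le_total v u with h | h
  · rw [abs_of_nonneg (sub_nonneg.mpr h)]
    simpa using key v u 1 h (fun t _ => by
      simpa using Real.exp_le_one_iff.mpr (by nlinarith [sq_nonneg t]))
  · rw [abs_sub_comm u v, abs_sub_comm, abs_of_nonneg (sub_nonneg.mpr h)]
    simpa using key u v 1 h (fun t _ => by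
      simpa using Real.exp_le_one_iff.mpr (by nlinarith [sq_nonneg t]))

lemma r_exp_le_one (r : ℝ) (hr : 0 ≤ r) : r * Real.exp (-r ^ 2 / 2) ≤ 1 := by
  have h := Real.add_one_le_exp (r ^ 2 / 2)
  have h2 : r ≤ Real.exp (r ^ 2 / 2) := by nlinarith [sq_nonneg (r - 1)]
  rw [show -r ^ 2 / 2 = -(r ^ 2 / 2) by ring, Real.exp_neg]
  rw [mul_inv_le_iff₀ (Real.exp_pos _), one_mul]
  exact h2

lemma stretch (x δ : ℝ) (hδ : 0 < δ) :
    |stdNormalCDF ((1 + δ) * x) - stdNormalCDF x| ≤ δ := by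
  rcases le_total 0 x with hx | hx
  · have hab : x ≤ (1 + δ) * x := by nlinarith
    have := key x ((1 + δ) * x) (Real.exp (-x ^ 2 / 2)) hab (fun t ht => by
      apply Real.exp_le_exp.mpr
      have h1 : x ≤ t := le_of_lt ht.1
      nlinarith)
    calc |stdNormalCDF ((1 + δ) * x) - stdNormalCDF x|
        ≤ Real.exp (-x ^ 2 / 2) * ((1 + δ) * x - x) := this
      _ = δ * (x * Real.exp (-x ^ 2 / 2)) := by ring
      _ ≤ δ * 1 := by
          apply mul_le_mul_of_nonneg_left (r_exp_le_one x hx) hδ.le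
      _ = δ := mul_one δ
  · have hab : (1 + δ) * x ≤ x := by nlinarith
    have := key ((1 + δ) * x) x (Real.exp (-x ^ 2 / 2)) hab (fun t ht => by
      apply Real.exp_le_exp.mpr
      have h1 : t ≤ x := ht.2
      nlinarith)
    rw [abs_sub_comm]
    calc |stdNormalCDF x - stdNormalCDF ((1 + δ) * x)|
        ≤ Real.exp (-x ^ 2 / 2) * (x - (1 + δ) * x) := this
      _ = δ * ((-x) * Real.exp (-x ^ 2 / 2)) := by ring
      _ ≤ δ * 1 := by
          apply mul_le_mul_of_nonneg_left _ hδ.le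
          have := r_exp_le_one (-x) (by linarith)
          simpa using this
      _ = δ := mul_one δ

theorem stmt_4 (x δ c : ℝ) (hδ : 0 < δ) (hc : |c| ≤ δ) :
    |stdNormalCDF ((1 + δ) * x + c) - stdNormalCDF x| ≤ 2 * δ := by
  have h1 : |stdNormalCDF ((1 + δ) * x + c) - stdNormalCDF ((1 + δ) * x)| ≤ δ := by
    have h := lip ((1 + δ) * x + c) ((1 + δ) * x)
    simp only [add_sub_cancel_left] at h
    exact h.trans hc
  have h2 := stretch x δ hδ
  calc |stdNormalCDF ((1 + δ) * x + c) - stdNormalCDF x|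
      ≤ |stdNormalCDF ((1 + δ) * x + c) - stdNormalCDF ((1 + δ) * x)| +
        |stdNormalCDF ((1 + δ) * x) - stdNormalCDF x| := abs_sub_le _ _ _
    _ ≤ δ + δ := add_le_add h1 h2
    _ = 2 * δ := by ring
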